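/- Let d ≥ 2 and let σ be a minimal permutation with d descents of size 2d. Then the second element of σ is 1 and the next-to-last element of σ is 2d: σ_2 = 1 and σ_{2d−1} = 2d. -/

import Mathlib

/-- `σ` has a descent at (0-based) position `i`, i.e. `σ i > σ (i+1)`. -/
def IsDescentAt {n : ℕ} (σ : Equiv.Perm (Fin n)) (i : ℕ) : Prop :=
  ∃ h : i + 1 < n, σ ⟨i + 1, h⟩ < σ ⟨i, Nat.lt_of_succ_lt h⟩

/-- The number of descents of `σ`. -/
noncomputable def descNum {n : ℕ} (σ : Equiv.Perm (Fin n)) : ℕ :=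
  {i : ℕ | IsDescentAt σ i}.ncard

/-- `π` is a pattern of `σ` (written `π ≺ σ`). -/
def IsPattern {k n : ℕ} (π : Equiv.Perm (Fin k)) (σ : Equiv.Perm (Fin n)) : Prop :=
  ∃ f : Fin k ↪o Fin n, ∀ ℓ m : Fin k, π ℓ < π m → σ (f ℓ) < σ (f m)

/-- `σ` is a minimal permutation with `d` descents: it has `d` descents and every
pattern `π ≺ σ` with `π ≠ σ` (equivalently, of strictly smaller size) has fewer
than `d` descents. -/
def MinimalWithDescents (d : ℕ) {n : ℕ} (σ : Equiv.Perm (Fin n)) : Prop :=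
  descNum σ = d ∧
    ∀ (k : ℕ) (π : Equiv.Perm (Fin k)), k < n → IsPattern π σ → descNum π < d

open scoped Classical in
noncomputable def descSet {n : ℕ} (σ : Equiv.Perm (Fin n)) : Finset ℕ :=
  (Finset.range (n - 1)).filter fun i => IsDescentAt σ i

lemma mem_descSet {n : ℕ} {σ : Equiv.Perm (Fin n)} {i : ℕ} :
    i ∈ descSet σ ↔ IsDescentAt σ i := by
  classical
  simp only [descSet, Finset.mem_filter, Finset.mem_range]
  refine ⟨fun h => h.2, fun h => ⟨?_, h⟩⟩
  obtain ⟨hb, -⟩ := h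
  omega

lemma descNum_eq_card {n : ℕ} (σ : Equiv.Perm (Fin n)) :
    descNum σ = (descSet σ).card := by
  have : {i : ℕ | IsDescentAt σ i} = ↑(descSet σ) := by
    ext i; simp [mem_descSet]
  rw [descNum, this, Set.ncard_coe_finset]

/-- Deleting the entry at position `p` from `σ` yields a pattern `π` of size `n-1`
whose descents are described explicitly. -/
lemma delete_pattern {n : ℕ} (σ : Equiv.Perm (Fin n)) (p : ℕ) (hp : p < n) :
    ∃ π : Equiv.Perm (Fin (n - 1)), IsPattern π σ ∧
      ∀ j : ℕ, ∀ h : j + 1 < n - 1,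
        (IsDescentAt π j ↔
          σ ⟨if j + 1 < p then j + 1 else j + 2, by split_ifs <;> omega⟩ <
            σ ⟨if j < p then j else j + 1, by split_ifs <;> omega⟩) := by
  obtain ⟨m, rfl⟩ : ∃ m, n = m + 1 := ⟨n - 1, by omega⟩
  have hm : m + 1 - 1 = m := rfl
  set P : Fin (m + 1) := ⟨p, hp⟩ with hP
  have hne : ∀ i : Fin m, σ (P.succAbove i) ≠ σ P := fun i h =>
    Fin.succAbove_ne P i (σ.injective h)
  have hex : ∀ i : Fin m, ∃ j : Fin m, (σ P).succAbove j = σ (P.succAbove i) :=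
    fun i => Fin.exists_succAbove_eq (hne i)
  choose g hg using hex
  have hginj : Function.Injective g := by
    intro a b hab
    have := congrArg (σ P).succAbove hab
    rw [hg, hg] at this
    exact Fin.succAbove_right_injective (σ.injective this)
  have hgbij : Function.Bijective g := (Finite.injective_iff_bijective).mp hginj
  let π : Equiv.Perm (Fin m) := Equiv.ofBijective g hgbij
  have hπ : ∀ i, π i = g i := fun i => rfl
  have hmono : ∀ a b : Fin m, π a < π b ↔ σ (P.succAbove a) < σ (P.succAbove b) := by
    intro a b
    rw [hπ, hπ, ← hg, ← hg, Fin.succAbove_lt_succAbove_iff]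
  have hsa : ∀ j : ℕ, ∀ hj : j < m, P.succAbove ⟨j, hj⟩ =
      ⟨if j < p then j else j + 1, by split_ifs <;> omega⟩ := by
    intro j hj
    by_cases hjp : j < p
    · rw [Fin.succAbove_of_castSucc_lt]
      · simp [hjp]
      · simpa [Fin.lt_def, hP] using hjp
    · rw [Fin.succAbove_of_le_castSucc]
      · simp [hjp]
      · simpa [Fin.le_def, hP] using Nat.le_of_not_lt hjp
  refine ⟨π, ⟨Fin.succAboveOrderEmb P, fun a b hab => (hmono a b).mp hab⟩, ?_⟩
  intro j h
  constructor
  · rintro ⟨h', hlt⟩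
    have := (hmono _ _).mp hlt
    rwa [hsa, hsa] at this
  · intro hlt
    refine ⟨h, (hmono _ _).mpr ?_⟩
    rwa [hsa, hsa]

/-- Master contradiction tool: if `σ` is minimal with `d` descents and there is an
injection `ψ` from the descent set of `σ` into the descents of the pattern obtained
by deleting position `p`, we get a contradiction. -/
lemma main_tool {n d : ℕ} (σ : Equiv.Perm (Fin n)) (h : MinimalWithDescents d σ)
    (hn : 0 < n) (p : ℕ) (hp : p < n) (ψ : ℕ → ℕ)
    (hinj : Set.InjOn ψ (descSet σ : Set ℕ))
    (hψ : ∀ j ∈ descSet σ, ∃ hb : ψ j + 1 < n - 1,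
      σ ⟨if ψ j + 1 < p then ψ j + 1 else ψ j + 2, by split_ifs <;> omega⟩ <
        σ ⟨if ψ j < p then ψ j else ψ j + 1, by split_ifs <;> omega⟩) : False := by
  obtain ⟨π, hpat, hdesc⟩ := delete_pattern σ p hp
  have hlt : descNum π < d := h.2 (n - 1) π (by omega) hpat
  have hcard : (descSet σ).card ≤ (descSet π).card := by
    apply Finset.card_le_card_of_injOn ψ _ hinj
    intro j hj
    obtain ⟨hb, hval⟩ := hψ j hj
    exact mem_descSet.mpr ((hdesc (ψ j) hb).mpr hval)
  rw [descNum_eq_card] at hlt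
  have hd : (descSet σ).card = d := by rw [← descNum_eq_card, h.1]
  omega

lemma isDescentAt_iff {n : ℕ} (σ : Equiv.Perm (Fin n)) {i : ℕ} (h : i + 1 < n) :
    IsDescentAt σ i ↔ σ ⟨i + 1, h⟩ < σ ⟨i, by omega⟩ :=
  ⟨fun ⟨_, hlt⟩ => hlt, fun hlt => ⟨h, hlt⟩⟩

lemma perm_lt_congr {n : ℕ} (σ : Equiv.Perm (Fin n)) {a b a' b' : ℕ} {ha : a < n} {hb : b < n}
    (ha' : a' < n) (hb' : b' < n) (ea : a = a') (eb : b = b') :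
    (σ ⟨a, ha⟩ < σ ⟨b, hb⟩) ↔ (σ ⟨a', ha'⟩ < σ ⟨b', hb'⟩) := by
  subst ea; subst eb; rfl


set_option maxHeartbeats 1000000 in
/-- A minimal permutation with `d ≥ 2` descents of size `2d` has `1` as its second
element and `2d` as its next-to-last element (in 0-based terms, the value at position
`1` is `0` and the value at position `2d - 2` is `2d - 1`). -/
theorem minimal_of_size_two_mul_second_and_penultimate (d : ℕ) (hd : 2 ≤ d)
    (σ : Equiv.Perm (Fin (2 * d))) (h : MinimalWithDescents d σ) :
    σ ⟨1, by omega⟩ = ⟨0, by omega⟩ ∧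
      σ ⟨2 * d - 2, by omega⟩ = ⟨2 * d - 1, by omega⟩ := by
  classical
  -- Step A: position 0 is a descent
  have hS0 : 0 ∈ descSet σ := by
    by_contra h0
    refine main_tool σ h (by omega) 0 (by omega) (fun j => j - 1) ?_ ?_
    · intro a ha b hb e
      have ha0 : a ≠ 0 := by rintro rfl; exact h0 (Finset.mem_coe.mp ha)
      have hb0 : b ≠ 0 := by rintro rfl; exact h0 (Finset.mem_coe.mp hb)
      simp only [] at e
      omega
    · intro j hj
      obtain ⟨hb1, hlt⟩ := mem_descSet.mp hj
      have hj0 : j ≠ 0 := by rintro rfl; exact h0 hj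
      refine ⟨by omega, ?_⟩
      rw [perm_lt_congr σ hb1 (Nat.lt_of_succ_lt hb1) (by split_ifs <;> omega)
        (by split_ifs <;> omega)]
      exact hlt
  -- Step B: position 2d-2 is a descent
  have hSlast : 2 * d - 2 ∈ descSet σ := by
    by_contra hL
    refine main_tool σ h (by omega) (2 * d - 1) (by omega) (fun j => j) ?_ ?_
    · exact fun a _ b _ e => e
    · intro j hj
      obtain ⟨hb1, hlt⟩ := mem_descSet.mp hj
      have hjne : j ≠ 2 * d - 2 := by rintro rfl; exact hL hj
      refine ⟨by omega, ?_⟩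
      rw [perm_lt_congr σ hb1 (Nat.lt_of_succ_lt hb1) (by split_ifs <;> omega)
        (by split_ifs <;> omega)]
      exact hlt
  -- Step C: no two consecutive ascents
  have hC : ∀ i, i + 2 < 2 * d → i ∉ descSet σ → i + 1 ∈ descSet σ := by
    intro i hi2 hni
    by_contra hni1
    refine main_tool σ h (by omega) (i + 1) (by omega)
      (fun j => if j < i + 1 then j else j - 1) ?_ ?_
    · intro a ha b hb e
      have ha1 : a ≠ i := by rintro rfl; exact hni (Finset.mem_coe.mp ha)
      have ha2 : a ≠ i + 1 := by rintro rfl; exact hni1 (Finset.mem_coe.mp ha)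
      have hb1 : b ≠ i := by rintro rfl; exact hni (Finset.mem_coe.mp hb)
      have hb2 : b ≠ i + 1 := by rintro rfl; exact hni1 (Finset.mem_coe.mp hb)
      simp only [] at e
      split_ifs at e <;> omega
    · intro j hj
      obtain ⟨hbj, hlt⟩ := mem_descSet.mp hj
      have hj1 : j ≠ i := by rintro rfl; exact hni hj
      have hj2 : j ≠ i + 1 := by rintro rfl; exact hni1 hj
      refine ⟨by split_ifs <;> omega, ?_⟩
      rw [perm_lt_congr σ hbj (Nat.lt_of_succ_lt hbj) (by split_ifs <;> omega)
        (by split_ifs <;> omega)]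
      exact hlt
  have hScard : (descSet σ).card = d := by rw [← descNum_eq_card, h.1]
  -- The image of the descent set under halving is all of range d
  have himg : (descSet σ).image (· / 2) = Finset.range d := by
    apply Finset.Subset.antisymm
    · intro x hx
      rw [Finset.mem_image] at hx
      obtain ⟨j, hj, rfl⟩ := hx
      obtain ⟨hbj, -⟩ := mem_descSet.mp hj
      rw [Finset.mem_range]
      omega
    · intro x hx
      rw [Finset.mem_range] at hx
      rw [Finset.mem_image]
      by_cases hxd : x + 1 < d
      · by_cases h2x : 2 * x ∈ descSet σ
        · exact ⟨2 * x, h2x, by omega⟩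
        · exact ⟨2 * x + 1, hC (2 * x) (by omega) h2x, by omega⟩
      · have hxe : x = d - 1 := by omega
        subst hxe
        exact ⟨2 * d - 2, hSlast, by omega⟩
  have hinj2 : Set.InjOn (· / 2) (descSet σ : Set ℕ) :=
    Finset.injOn_of_card_image_eq (by rw [himg, Finset.card_range, hScard])
  -- descents exactly at even positions
  have heven : ∀ k, k < d → 2 * k ∈ descSet σ := by
    intro k
    induction k with
    | zero => intro _; simpa using hS0
    | succ k ih =>
      intro hk
      have h2k := ih (by omega)
      have hodd1 : 2 * k + 1 ∉ descSet σ := by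
        intro hmem
        have := hinj2 (Finset.mem_coe.mpr h2k) (Finset.mem_coe.mpr hmem)
          (by simp only []; omega)
        omega
      have := hC (2 * k + 1) (by omega) hodd1
      rw [show 2 * (k + 1) = 2 * k + 1 + 1 from by omega]
      exact this
  have hodd : ∀ k, k + 1 < d → 2 * k + 1 ∉ descSet σ := by
    intro k hk hmem
    have := hinj2 (Finset.mem_coe.mpr (heven k (by omega))) (Finset.mem_coe.mpr hmem)
      (by simp only []; omega)
    omega
  have hDesc : ∀ k (hk : k < d), σ ⟨2 * k + 1, by omega⟩ < σ ⟨2 * k, by omega⟩ := by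
    intro k hk
    obtain ⟨hb, hlt⟩ := mem_descSet.mp (heven k hk)
    exact hlt
  have hAsc : ∀ k (hk : k + 1 < d), σ ⟨2 * k + 1, by omega⟩ < σ ⟨2 * k + 2, by omega⟩ := by
    intro k hk
    have hno : ¬ IsDescentAt σ (2 * k + 1) := fun hdd => hodd k hk (mem_descSet.mpr hdd)
    have hnlt : ¬ (σ ⟨2 * k + 2, by omega⟩ < σ ⟨2 * k + 1, by omega⟩) := by
      intro hl
      refine hno ⟨by omega, ?_⟩
      rw [perm_lt_congr σ (show 2 * k + 2 < 2 * d by omega) (show 2 * k + 1 < 2 * d by omega)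
        (by omega) rfl]
      exact hl
    have hne : σ ⟨2 * k + 1, by omega⟩ ≠ σ ⟨2 * k + 2, by omega⟩ := by
      intro e
      have := σ.injective e
      rw [Fin.mk.injEq] at this
      omega
    exact lt_of_le_of_ne (not_lt.mp hnlt) hne
  -- chain steps
  have hA : ∀ k (hk : k + 1 < d), σ ⟨2 * k, by omega⟩ < σ ⟨2 * k + 2, by omega⟩ := by
    intro k hk
    by_contra hcon
    have hne : σ ⟨2 * k + 2, by omega⟩ ≠ σ ⟨2 * k, by omega⟩ := by
      intro e
      have := σ.injective e
      rw [Fin.mk.injEq] at this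
      omega
    have hgt : σ ⟨2 * k + 2, by omega⟩ < σ ⟨2 * k, by omega⟩ :=
      lt_of_le_of_ne (not_lt.mp hcon) hne
    have hodd1 : 2 * k + 1 ∉ descSet σ := hodd k hk
    refine main_tool σ h (by omega) (2 * k + 1) (by omega)
      (fun j => if j < 2 * k + 1 then j else j - 1) ?_ ?_
    · intro a ha b hb e
      have ha1 : a ≠ 2 * k + 1 := by rintro rfl; exact hodd1 (Finset.mem_coe.mp ha)
      have hb1 : b ≠ 2 * k + 1 := by rintro rfl; exact hodd1 (Finset.mem_coe.mp hb)
      simp only [] at e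
      split_ifs at e <;> omega
    · intro j hj
      obtain ⟨hbj, hlt⟩ := mem_descSet.mp hj
      have hj1 : j ≠ 2 * k + 1 := by rintro rfl; exact hodd1 hj
      by_cases hj2 : j = 2 * k
      · subst hj2
        refine ⟨by split_ifs <;> omega, ?_⟩
        rw [perm_lt_congr σ (show 2 * k + 2 < 2 * d by omega) (show 2 * k < 2 * d by omega)
          (by split_ifs <;> omega) (by split_ifs <;> omega)]
        exact hgt
      · refine ⟨by split_ifs <;> omega, ?_⟩
        rw [perm_lt_congr σ hbj (Nat.lt_of_succ_lt hbj) (by split_ifs <;> omega)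
          (by split_ifs <;> omega)]
        exact hlt
  have hB : ∀ k (hk : k + 1 < d), σ ⟨2 * k + 1, by omega⟩ < σ ⟨2 * k + 3, by omega⟩ := by
    intro k hk
    by_contra hcon
    have hne : σ ⟨2 * k + 3, by omega⟩ ≠ σ ⟨2 * k + 1, by omega⟩ := by
      intro e
      have := σ.injective e
      rw [Fin.mk.injEq] at this
      omega
    have hgt : σ ⟨2 * k + 3, by omega⟩ < σ ⟨2 * k + 1, by omega⟩ :=
      lt_of_le_of_ne (not_lt.mp hcon) hne
    have hodd1 : 2 * k + 1 ∉ descSet σ := hodd k hk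
    refine main_tool σ h (by omega) (2 * k + 2) (by omega)
      (fun j => if j < 2 * k + 2 then j else j - 1) ?_ ?_
    · intro a ha b hb e
      have ha1 : a ≠ 2 * k + 1 := by rintro rfl; exact hodd1 (Finset.mem_coe.mp ha)
      have hb1 : b ≠ 2 * k + 1 := by rintro rfl; exact hodd1 (Finset.mem_coe.mp hb)
      simp only [] at e
      split_ifs at e <;> omega
    · intro j hj
      obtain ⟨hbj, hlt⟩ := mem_descSet.mp hj
      have hj1 : j ≠ 2 * k + 1 := by rintro rfl; exact hodd1 hj
      by_cases hj2 : j = 2 * k + 2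
      · subst hj2
        refine ⟨by split_ifs <;> omega, ?_⟩
        rw [perm_lt_congr σ (show 2 * k + 3 < 2 * d by omega)
          (show 2 * k + 1 < 2 * d by omega)
          (by split_ifs <;> omega) (by split_ifs <;> omega)]
        exact hgt
      · refine ⟨by split_ifs <;> omega, ?_⟩
        rw [perm_lt_congr σ hbj (Nat.lt_of_succ_lt hbj) (by split_ifs <;> omega)
          (by split_ifs <;> omega)]
        exact hlt
  -- chains
  have chainE : ∀ l (hl : l < d) (k : ℕ) (hk : k < l),
      σ ⟨2 * k, by omega⟩ < σ ⟨2 * l, by omega⟩ := by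
    intro l
    induction l with
    | zero => intro _ k hk; exact absurd hk (by omega)
    | succ l ih =>
      intro hl k hk
      have hstep : σ ⟨2 * l, by omega⟩ < σ ⟨2 * (l + 1), by omega⟩ := by
        rw [perm_lt_congr σ (show 2 * l < 2 * d by omega) (show 2 * l + 2 < 2 * d by omega)
          rfl (by ring)]
        exact hA l (by omega)
      rcases Nat.lt_succ_iff_lt_or_eq.mp hk with hkl | rfl
      · exact lt_trans (ih (by omega) k hkl) hstep
      · exact hstep
  have chainO : ∀ l (hl : l < d) (k : ℕ) (hk : k < l),
      σ ⟨2 * k + 1, by omega⟩ < σ ⟨2 * l + 1, by omega⟩ := by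
    intro l
    induction l with
    | zero => intro _ k hk; exact absurd hk (by omega)
    | succ l ih =>
      intro hl k hk
      have hstep : σ ⟨2 * l + 1, by omega⟩ < σ ⟨2 * (l + 1) + 1, by omega⟩ := by
        rw [perm_lt_congr σ (show 2 * l + 1 < 2 * d by omega)
          (show 2 * l + 3 < 2 * d by omega) rfl (by ring)]
        exact hB l (by omega)
      rcases Nat.lt_succ_iff_lt_or_eq.mp hk with hkl | rfl
      · exact lt_trans (ih (by omega) k hkl) hstep
      · exact hstep
  have hbot : ∀ z : Fin (2 * d), ¬ z < (⟨0, by omega⟩ : Fin (2 * d)) := by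
    intro z hz
    rw [Fin.lt_def] at hz; simp only [Fin.val_mk] at hz
    exact Nat.not_lt_zero _ hz
  have htop : ∀ z : Fin (2 * d), ¬ (⟨2 * d - 1, by omega⟩ : Fin (2 * d)) < z := by
    intro z hz
    rw [Fin.lt_def] at hz; simp only [Fin.val_mk] at hz
    have := z.isLt
    omega
  constructor
  · obtain ⟨x, hx⟩ : ∃ x : Fin (2 * d), σ x = ⟨0, by omega⟩ :=
      ⟨σ.symm _, σ.apply_symm_apply _⟩
    have hxlt : (x : ℕ) < 2 * d := x.isLt
    suffices hx1 : x = ⟨1, by omega⟩ by rw [← hx1]; exact hx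
    rcases Nat.even_or_odd (x : ℕ) with ⟨k, hk⟩ | ⟨k, hk⟩
    · exfalso
      rcases Nat.eq_zero_or_pos k with rfl | hkpos
      · have h0 := hDesc 0 (by omega)
        have e2 : (⟨2 * 0, by omega⟩ : Fin (2 * d)) = x := Fin.ext (by simp only [Fin.val_mk]; omega)
        rw [e2, hx] at h0
        exact hbot _ h0
      · have ha := hAsc (k - 1) (by omega)
        have e2 : (⟨2 * (k - 1) + 2, by omega⟩ : Fin (2 * d)) = x := Fin.ext (by simp only [Fin.val_mk]; omega)
        rw [e2, hx] at ha
        exact hbot _ ha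
    · rcases Nat.eq_zero_or_pos k with rfl | hkpos
      · exact Fin.ext (by simp only [Fin.val_mk]; omega)
      · exfalso
        have hco := chainO k (by omega) 0 hkpos
        have e2 : (⟨2 * k + 1, by omega⟩ : Fin (2 * d)) = x := Fin.ext (by simp only [Fin.val_mk]; omega)
        rw [e2, hx] at hco
        exact hbot _ hco
  · obtain ⟨y, hy⟩ : ∃ y : Fin (2 * d), σ y = ⟨2 * d - 1, by omega⟩ :=
      ⟨σ.symm _, σ.apply_symm_apply _⟩
    have hylt : (y : ℕ) < 2 * d := y.isLt
    suffices hy1 : y = ⟨2 * d - 2, by omega⟩ by rw [← hy1]; exact hy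
    rcases Nat.even_or_odd (y : ℕ) with ⟨k, hk⟩ | ⟨k, hk⟩
    · by_cases hkd : k = d - 1
      · exact Fin.ext (by simp only [Fin.val_mk]; omega)
      · exfalso
        have hce := chainE (d - 1) (by omega) k (by omega)
        have e2 : (⟨2 * k, by omega⟩ : Fin (2 * d)) = y := Fin.ext (by simp only [Fin.val_mk]; omega)
        rw [e2, hy] at hce
        exact htop _ hce
    · exfalso
      by_cases hkd : k = d - 1
      · subst hkd
        have h0 := hDesc (d - 1) (by omega)
        have e2 : (⟨2 * (d - 1) + 1, by omega⟩ : Fin (2 * d)) = y := Fin.ext (by simp only [Fin.val_mk]; omega)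
        rw [e2, hy] at h0
        exact htop _ h0
      · have ha := hAsc k (by omega)
        have e2 : (⟨2 * k + 1, by omega⟩ : Fin (2 * d)) = y := Fin.ext (by simp only [Fin.val_mk]; omega)
        rw [e2, hy] at ha
        exact htop _ ha
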